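/- For the Iwasawa model, the second Gauduchon–Ricci form is given explicitly as follows. Define the endomorphism E^t := Ω^t(e₀,e₁) + Ω^t(e₂,e₃) + Ω^t(e₄,e₅) and ρ^{t,(2)}(X, Y) := ⟨E^t X, Y⟩. Then ρ^{t,(2)}(e₀,e₁) = ρ^{t,(2)}(e₂,e₃) = α²(t−1)²/2, ρ^{t,(2)}(e₄,e₅) = −α²(t−1)², and ρ^{t,(2)}(e_i, e_j) = 0 for all other pairs i < j. In particular 2(ρ^{t,(2)}(e₀,e₁) + ρ^{t,(2)}(e₂,e₃) + ρ^{t,(2)}(e₄,e₅)) = 0, i.e. the Gauduchon scalar curvature vanishes for every t. -/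
import Mathlib


set_option maxHeartbeats 8000000

open scoped RealInnerProductSpace

/-- The standard basis of `ℝ⁶`. -/
noncomputable def e6 (i : Fin 6) : EuclideanSpace ℝ (Fin 6) :=
  EuclideanSpace.single i 1

/-- Coefficient table: `(A^t e_i) e_j = (α(t-1)/2) ∑ₖ cTab i j k • e_k`. -/
noncomputable def cTab (i j k : Fin 6) : ℝ :=
  if (i.val, j.val, k.val) ∈ [(0,2,4),(0,3,5),(1,2,5),(1,4,3),(2,4,0),(2,5,1),(3,1,4),(3,5,0)]
  then 1
  else if (i.val, j.val, k.val) ∈ [(0,4,2),(0,5,3),(1,3,4),(1,5,2),(2,0,4),(2,1,5),(3,0,5),(3,4,1)]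
  then -1 else 0

/-- Value table for the second Gauduchon–Ricci form. -/
noncomputable def rTab (i j : Fin 6) : ℝ :=
  if (i.val, j.val) ∈ [(0,1),(2,3)] then 1/2
  else if (i.val, j.val) ∈ [(1,0),(3,2)] then -1/2
  else if (i.val, j.val) = (4,5) then -1
  else if (i.val, j.val) = (5,4) then 1 else 0

/-- For the Iwasawa model, the second Gauduchon–Ricci form
`ρ^{t,(2)}(X,Y) = ⟨E^t X, Y⟩`, with `E^t = Ω^t(e₀,e₁) + Ω^t(e₂,e₃) + Ω^t(e₄,e₅)`,
satisfies `ρ^{t,(2)}(e₀,e₁) = ρ^{t,(2)}(e₂,e₃) = α²(t−1)²/2`,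
`ρ^{t,(2)}(e₄,e₅) = −α²(t−1)²`, and vanishes on all other pairs `i < j`; in particular
the Gauduchon scalar curvature vanishes for every `t`. -/
theorem stmt_13 (α : ℝ) (hα : 0 < α)
    (μ : EuclideanSpace ℝ (Fin 6) →ₗ[ℝ]
      EuclideanSpace ℝ (Fin 6) →ₗ[ℝ] EuclideanSpace ℝ (Fin 6))
    (hμalt : ∀ X, μ X X = 0)
    (h02 : μ (e6 0) (e6 2) = α • e6 4)
    (h03 : μ (e6 0) (e6 3) = α • e6 5)
    (h12 : μ (e6 1) (e6 2) = α • e6 5)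
    (h13 : μ (e6 1) (e6 3) = -(α • e6 4))
    (hzero : ∀ i j : Fin 6, i < j →
      (i, j) ≠ (0, 2) → (i, j) ≠ (0, 3) → (i, j) ≠ (1, 2) → (i, j) ≠ (1, 3) →
      μ (e6 i) (e6 j) = 0)
    (I : EuclideanSpace ℝ (Fin 6) →ₗ[ℝ] EuclideanSpace ℝ (Fin 6))
    (hI0 : I (e6 0) = e6 1) (hI1 : I (e6 1) = -e6 0)
    (hI2 : I (e6 2) = e6 3) (hI3 : I (e6 3) = -e6 2)
    (hI4 : I (e6 4) = e6 5) (hI5 : I (e6 5) = -e6 4)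
    -- the Levi-Civita operator `S^μ`
    (S : EuclideanSpace ℝ (Fin 6) →
      (EuclideanSpace ℝ (Fin 6) →ₗ[ℝ] EuclideanSpace ℝ (Fin 6)))
    (hS : ∀ X Y Z, ⟪S X Y, Z⟫ =
      -(1 / 2) * ⟪μ X Y, Z⟫ - (1 / 2) * ⟪μ Z X, Y⟫ - (1 / 2) * ⟪μ Z Y, X⟫)
    -- the `3`-form `F^μ`
    (F : EuclideanSpace ℝ (Fin 6) → EuclideanSpace ℝ (Fin 6) →
      EuclideanSpace ℝ (Fin 6) → ℝ)
    (hF : ∀ X Y Z, F X Y Z =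
      -⟪μ (I X) (I Y), Z⟫ - ⟪μ (I Y) (I Z), X⟫ - ⟪μ (I Z) (I X), Y⟫)
    -- the Gauduchon operator `A^t` (integrable case)
    (A : ℝ → EuclideanSpace ℝ (Fin 6) →
      (EuclideanSpace ℝ (Fin 6) →ₗ[ℝ] EuclideanSpace ℝ (Fin 6)))
    (hA : ∀ (t : ℝ) (X Y Z : EuclideanSpace ℝ (Fin 6)),
      ⟪A t X Y, Z⟫ = ⟪S X Y, Z⟫ + ((t + 1) / 4) * F X (I Y) (I Z)
        + ((t - 1) / 4) * F X Y Z) :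
    let Ω : ℝ → EuclideanSpace ℝ (Fin 6) → EuclideanSpace ℝ (Fin 6) →
        (EuclideanSpace ℝ (Fin 6) →ₗ[ℝ] EuclideanSpace ℝ (Fin 6)) :=
      fun t X Y => -((A t X) ∘ₗ (A t Y) - (A t Y) ∘ₗ (A t X)) - A t (μ X Y)
    let Et : ℝ → (EuclideanSpace ℝ (Fin 6) →ₗ[ℝ] EuclideanSpace ℝ (Fin 6)) :=
      fun t => Ω t (e6 0) (e6 1) + Ω t (e6 2) (e6 3) + Ω t (e6 4) (e6 5)
    let ρ₂ : ℝ → EuclideanSpace ℝ (Fin 6) → EuclideanSpace ℝ (Fin 6) → ℝ :=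
      fun t X Y => ⟪Et t X, Y⟫
    ∀ t : ℝ,
      ρ₂ t (e6 0) (e6 1) = α ^ 2 * (t - 1) ^ 2 / 2 ∧
      ρ₂ t (e6 2) (e6 3) = α ^ 2 * (t - 1) ^ 2 / 2 ∧
      ρ₂ t (e6 4) (e6 5) = -(α ^ 2 * (t - 1) ^ 2) ∧
      (∀ i j : Fin 6, i < j →
        (i, j) ≠ (0, 1) → (i, j) ≠ (2, 3) → (i, j) ≠ (4, 5) →
        ρ₂ t (e6 i) (e6 j) = 0) ∧
      2 * (ρ₂ t (e6 0) (e6 1) + ρ₂ t (e6 2) (e6 3) + ρ₂ t (e6 4) (e6 5)) = 0 := by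
  intro Ω Et ρ₂ t
  have hanti : ∀ X Y, μ Y X = -μ X Y := by
    intro X Y
    have h := hμalt (X + Y)
    simp only [map_add, LinearMap.add_apply, hμalt, zero_add, add_zero] at h
    exact eq_neg_of_add_eq_zero_left h
  have he : ∀ (v : EuclideanSpace ℝ (Fin 6)) (k : Fin 6), ⟪v, e6 k⟫ = v k := by
    intro v k; simp [e6, EuclideanSpace.inner_single_right]
  have hee : ∀ a b : Fin 6, ⟪e6 a, e6 b⟫ = if b = a then (1:ℝ) else 0 := by
    intro a b; rw [he]; simp [e6, EuclideanSpace.single_apply]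
  have hexp : ∀ v : EuclideanSpace ℝ (Fin 6), v = ∑ k, v k • e6 k := by
    intro v
    simpa [e6, EuclideanSpace.basisFun_apply, EuclideanSpace.basisFun_repr] using
      ((EuclideanSpace.basisFun (Fin 6) ℝ).sum_repr v).symm
  have mv00 : μ (e6 0) (e6 0) = 0 := hμalt _
  have mv01 : μ (e6 0) (e6 1) = 0 := hzero 0 1 (by decide) (by decide) (by decide) (by decide) (by decide)
  have mv02 : μ (e6 0) (e6 2) = α • e6 4 := h02
  have mv03 : μ (e6 0) (e6 3) = α • e6 5 := h03
  have mv04 : μ (e6 0) (e6 4) = 0 := hzero 0 4 (by decide) (by decide) (by decide) (by decide) (by decide)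
  have mv05 : μ (e6 0) (e6 5) = 0 := hzero 0 5 (by decide) (by decide) (by decide) (by decide) (by decide)
  have mv10 : μ (e6 1) (e6 0) = 0 := by rw [hanti, mv01, neg_zero]
  have mv11 : μ (e6 1) (e6 1) = 0 := hμalt _
  have mv12 : μ (e6 1) (e6 2) = α • e6 5 := h12
  have mv13 : μ (e6 1) (e6 3) = -(α • e6 4) := h13
  have mv14 : μ (e6 1) (e6 4) = 0 := hzero 1 4 (by decide) (by decide) (by decide) (by decide) (by decide)
  have mv15 : μ (e6 1) (e6 5) = 0 := hzero 1 5 (by decide) (by decide) (by decide) (by decide) (by decide)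
  have mv20 : μ (e6 2) (e6 0) = -(α • e6 4) := by rw [hanti, mv02]
  have mv21 : μ (e6 2) (e6 1) = -(α • e6 5) := by rw [hanti, mv12]
  have mv22 : μ (e6 2) (e6 2) = 0 := hμalt _
  have mv23 : μ (e6 2) (e6 3) = 0 := hzero 2 3 (by decide) (by decide) (by decide) (by decide) (by decide)
  have mv24 : μ (e6 2) (e6 4) = 0 := hzero 2 4 (by decide) (by decide) (by decide) (by decide) (by decide)
  have mv25 : μ (e6 2) (e6 5) = 0 := hzero 2 5 (by decide) (by decide) (by decide) (by decide) (by decide)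
  have mv30 : μ (e6 3) (e6 0) = -(α • e6 5) := by rw [hanti, mv03]
  have mv31 : μ (e6 3) (e6 1) = α • e6 4 := by rw [hanti, mv13, neg_neg]
  have mv32 : μ (e6 3) (e6 2) = 0 := by rw [hanti, mv23, neg_zero]
  have mv33 : μ (e6 3) (e6 3) = 0 := hμalt _
  have mv34 : μ (e6 3) (e6 4) = 0 := hzero 3 4 (by decide) (by decide) (by decide) (by decide) (by decide)
  have mv35 : μ (e6 3) (e6 5) = 0 := hzero 3 5 (by decide) (by decide) (by decide) (by decide) (by decide)
  have mv40 : μ (e6 4) (e6 0) = 0 := by rw [hanti, mv04, neg_zero]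
  have mv41 : μ (e6 4) (e6 1) = 0 := by rw [hanti, mv14, neg_zero]
  have mv42 : μ (e6 4) (e6 2) = 0 := by rw [hanti, mv24, neg_zero]
  have mv43 : μ (e6 4) (e6 3) = 0 := by rw [hanti, mv34, neg_zero]
  have mv44 : μ (e6 4) (e6 4) = 0 := hμalt _
  have mv45 : μ (e6 4) (e6 5) = 0 := hzero 4 5 (by decide) (by decide) (by decide) (by decide) (by decide)
  have mv50 : μ (e6 5) (e6 0) = 0 := by rw [hanti, mv05, neg_zero]
  have mv51 : μ (e6 5) (e6 1) = 0 := by rw [hanti, mv15, neg_zero]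
  have mv52 : μ (e6 5) (e6 2) = 0 := by rw [hanti, mv25, neg_zero]
  have mv53 : μ (e6 5) (e6 3) = 0 := by rw [hanti, mv35, neg_zero]
  have mv54 : μ (e6 5) (e6 4) = 0 := by rw [hanti, mv45, neg_zero]
  have mv55 : μ (e6 5) (e6 5) = 0 := hμalt _
  have hk6 : ∀ k : Fin 6, k = 0 ∨ k = 1 ∨ k = 2 ∨ k = 3 ∨ k = 4 ∨ k = 5 := by decide
  have hg : ∀ i j k : Fin 6, ⟪A t (e6 i) (e6 j), e6 k⟫ = α * (t - 1) / 2 * cTab i j k := by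
    intro i j k
    rw [hA, hS, hF, hF]
    rcases hk6 i with rfl | rfl | rfl | rfl | rfl | rfl <;>
      rcases hk6 j with rfl | rfl | rfl | rfl | rfl | rfl <;>
      rcases hk6 k with rfl | rfl | rfl | rfl | rfl | rfl <;>
      simp only [hI0, hI1, hI2, hI3, hI4, hI5, map_neg, LinearMap.neg_apply,
        mv00, mv01, mv02, mv03, mv04, mv05, mv10, mv11, mv12, mv13, mv14, mv15,
        mv20, mv21, mv22, mv23, mv24, mv25, mv30, mv31, mv32, mv33, mv34, mv35,
        mv40, mv41, mv42, mv43, mv44, mv45, mv50, mv51, mv52, mv53, mv54, mv55,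
        inner_neg_left, inner_neg_right, real_inner_smul_left,
        inner_zero_left, inner_zero_right, hee, neg_neg, neg_zero] <;>
      simp (config := { decide := true }) [cTab] <;> ring
  have hgc : ∀ i j k : Fin 6, (A t (e6 i) (e6 j)) k = α * (t - 1) / 2 * cTab i j k := by
    intro i j k; rw [← he (A t (e6 i) (e6 j)) k]; exact hg i j k
  have key : ∀ a b i j : Fin 6, ⟪A t (e6 a) (A t (e6 b) (e6 i)), e6 j⟫
      = ∑ k : Fin 6, (α * (t - 1) / 2 * cTab b i k) * (α * (t - 1) / 2 * cTab a k j) := by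
    intro a b i j
    conv_lhs => rw [hexp (A t (e6 b) (e6 i))]
    rw [map_sum, sum_inner]
    refine Finset.sum_congr rfl fun k _ => ?_
    rw [map_smul, real_inner_smul_left, hgc, hg]
  have hA0 : ∀ (v : EuclideanSpace ℝ (Fin 6)) (j : Fin 6), ⟪A t 0 v, e6 j⟫ = 0 := by
    intro v j
    rw [hA, hS, hF, hF]
    simp [map_zero]
  have master : ∀ i j : Fin 6, ρ₂ t (e6 i) (e6 j) = α ^ 2 * (t - 1) ^ 2 * rTab i j := by
    intro i j
    simp only [ρ₂, Et, Ω, mv01, mv23, mv45, LinearMap.add_apply, LinearMap.sub_apply,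
      LinearMap.neg_apply, LinearMap.comp_apply, inner_add_left, inner_sub_left,
      inner_neg_left, key, hA0]
    rcases hk6 i with rfl | rfl | rfl | rfl | rfl | rfl <;>
      rcases hk6 j with rfl | rfl | rfl | rfl | rfl | rfl <;>
      simp (config := { decide := true }) [Fin.sum_univ_six, cTab, rTab] <;> ring
  refine ⟨?_, ?_, ?_, ?_, ?_⟩
  · rw [master]; simp (config := { decide := true }) [rTab] <;> ring
  · rw [master]; simp (config := { decide := true }) [rTab] <;> ring
  · rw [master]; simp (config := { decide := true }) [rTab] <;> ring
  · intro i j hlt h1 h2 h3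
    rw [master]
    rcases hk6 i with rfl | rfl | rfl | rfl | rfl | rfl <;>
      rcases hk6 j with rfl | rfl | rfl | rfl | rfl | rfl <;>
      first
        | exact absurd hlt (by decide)
        | exact absurd rfl h1
        | exact absurd rfl h2
        | exact absurd rfl h3
        | simp (config := { decide := true }) [rTab]
  · rw [master, master, master]
    simp (config := { decide := true }) [rTab] <;> ring
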